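/- The spectrum Spec(A) of a commutative ring A, as a ringed space with its structure sheaf, satisfies the condition 'for every local section s of the structure sheaf, if the only open on which s is invertible is empty, then s = 0' if and only if A is reduced. -/

import Mathlib

open AlgebraicGeometry TopologicalSpace Opposite CategoryTheory

theorem spec_section_condition_iff_reduced (A : Type*) [CommRing A] :
    (∀ (U : Opens (PrimeSpectrum.Top A)) (s : (Spec.structureSheaf A).val.obj (op U)),
      (∀ (V : Opens (PrimeSpectrum.Top A)) (h : V ≤ U),
        IsUnit ((Spec.structureSheaf A).val.map (homOfLE h).op s) → V = ⊥) →
      s = 0) ↔ IsReduced A := by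
  constructor
  · intro h
    rw [isReduced_iff]
    intro f hf
    have hs : StructureSheaf.toOpen A ⊤ f = 0 := by
      apply h ⊤
      intro V hV hu
      by_contra hne
      obtain ⟨p, hp⟩ := (Opens.ne_bot_iff_nonempty V).mp hne
      -- the restriction is nilpotent and a unit, hence O(V) is trivial
      have hnil : IsNilpotent ((Spec.structureSheaf A).val.map (homOfLE hV).op
          (StructureSheaf.toOpen A ⊤ f)) :=
        (hf.map (StructureSheaf.toOpen A ⊤).hom).map
          ((Spec.structureSheaf A).val.map (homOfLE hV).op).hom
      have h01 : (0 : (Spec.structureSheaf A).val.obj (op V)) = 1 := by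
        obtain ⟨n, hn⟩ := hnil
        exact isUnit_zero_iff.mp (hn ▸ hu.pow n)
      -- push to the stalk at p, which is nontrivial
      have := congrArg ((Spec.structureSheaf A).presheaf.germ V p hp) h01
      rw [map_zero, map_one] at this
      have : Subsingleton ((Spec.structureSheaf A).presheaf.stalk p) :=
        subsingleton_of_zero_eq_one this
      haveI hpr : p.asIdeal.IsPrime := p.2
      have hsub : Subsingleton (Localization.AtPrime p.asIdeal) :=
        @Equiv.subsingleton _ _ (StructureSheaf.stalkIso A p).toEquiv this
      exact false_of_nontrivial_of_subsingleton (Localization.AtPrime p.asIdeal)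
    have hinj : Function.Injective (StructureSheaf.toOpen (CommRingCat.of A) ⊤) := by
      rw [show StructureSheaf.toOpen (CommRingCat.of A) ⊤ =
        (StructureSheaf.globalSectionsIso (CommRingCat.of A)).hom from rfl]
      exact (ConcreteCategory.bijective_of_isIso _).1
    exact hinj (by simp only [map_zero]; exact hs)
  · intro hA U s hs
    haveI : IsReduced (Spec (CommRingCat.of A)) := by
      haveI : _root_.IsReduced (CommRingCat.of A) := hA
      infer_instance
    set X' : RingedSpace := (Spec (CommRingCat.of A)).toLocallyRingedSpace.toRingedSpace with hX'
    have hb := RingedSpace.isUnit_res_basicOpen (X := X') s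
    have hbot : X'.basicOpen s = ⊥ := hs _ (X'.basicOpen_le s) hb
    exact eq_zero_of_basicOpen_eq_bot (X := Spec (CommRingCat.of A)) (U := U) s hbot
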